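/- If a W-orbit O on ℤ² satisfies O ∩ (P⁺ ∪ −P⁺) = ∅, then O contains a point of the form (k, −l) with k and l positive integers. -/
import Mathlib


/-- Simple reflection `r1 : (x, y) ↦ (-x, y + b x)` on the weight lattice `ℤ × ℤ`. -/
def r1 (b : ℤ) : Equiv.Perm (ℤ × ℤ) :=
  Function.Involutive.toPerm (fun v => (-v.1, v.2 + b * v.1))
    (fun v => by simp [Prod.ext_iff])

/-- Simple reflection `r2 : (x, y) ↦ (x + a y, -y)` on the weight lattice `ℤ × ℤ`. -/
def r2 (a : ℤ) : Equiv.Perm (ℤ × ℤ) :=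
  Function.Involutive.toPerm (fun v => (v.1 + a * v.2, -v.2))
    (fun v => by simp [Prod.ext_iff])

/-- The Weyl group `W`, the group of bijections of `ℤ × ℤ` generated by `r1` and `r2`. -/
def W (a b : ℤ) : Subgroup (Equiv.Perm (ℤ × ℤ)) :=
  Subgroup.closure {r1 b, r2 a}

/-- The `W`-orbit of a point `v ∈ ℤ × ℤ`. -/
def Worbit (a b : ℤ) (v : ℤ × ℤ) : Set (ℤ × ℤ) :=
  {w : ℤ × ℤ | ∃ g ∈ W a b, g v = w}

/-- The set of dominant integral weights `P⁺`. -/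
def Pplus : Set (ℤ × ℤ) := {v : ℤ × ℤ | 0 ≤ v.1 ∧ 0 ≤ v.2}

/-- The set of antidominant integral weights `-P⁺`. -/
def Pminus : Set (ℤ × ℤ) := {v : ℤ × ℤ | v.1 ≤ 0 ∧ v.2 ≤ 0}

theorem orbit_avoids_dominant_contains_pos_neg (a b : ℤ) (ha : 2 ≤ a) (hb : 2 ≤ b)
    (hab : 4 < a * b) (v : ℤ × ℤ)
    (h : Worbit a b v ∩ (Pplus ∪ Pminus) = ∅) :
    ∃ k l : ℤ, 0 < k ∧ 0 < l ∧ (k, -l) ∈ Worbit a b v := by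
  have hv : v ∈ Worbit a b v := ⟨1, one_mem _, rfl⟩
  have hr1 : r1 b v ∈ Worbit a b v :=
    ⟨r1 b, Subgroup.subset_closure (by simp), rfl⟩
  have hnot : ∀ w ∈ Worbit a b v, ¬ (0 ≤ w.1 ∧ 0 ≤ w.2) ∧ ¬ (w.1 ≤ 0 ∧ w.2 ≤ 0) := by
    intro w hw
    constructor <;> intro hw' <;>
      exact Set.eq_empty_iff_forall_notMem.mp h w
        ⟨hw, by first
          | exact Or.inl hw'
          | exact Or.inr hw'⟩
  obtain ⟨h1, h2⟩ := hnot v hv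
  by_cases hx : 0 < v.1
  · have hy : v.2 < 0 := by
      by_contra hy
      exact h1 ⟨le_of_lt hx, le_of_not_gt hy⟩
    exact ⟨v.1, -v.2, hx, by omega, by simpa using hv⟩
  · push_neg at hx
    have hy : 0 < v.2 := by
      by_contra hy
      exact h2 ⟨hx, le_of_not_gt hy⟩
    have hx' : v.1 < 0 := by
      by_contra hx'
      exact h1 ⟨le_of_not_gt hx', le_of_lt hy⟩
    obtain ⟨g1, _⟩ := hnot (r1 b v) hr1
    have hw1 : (r1 b v).1 = -v.1 := rfl
    have hw2 : (r1 b v).2 = v.2 + b * v.1 := rfl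
    have hneg : v.2 + b * v.1 < 0 := by
      by_contra hneg
      exact g1 ⟨by omega, by omega⟩
    refine ⟨-v.1, -(v.2 + b * v.1), by omega, by omega, ?_⟩
    have : ((-v.1 : ℤ), -(-(v.2 + b * v.1))) = r1 b v := by
      simp [r1, Function.Involutive.toPerm]
    rw [this]; exact hr1
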